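/- Let X = ℝ and φ ∈ Γ₀(ℝ), ε > 0. Then for every y ∈ ℝ the set ⋃_{|ȳ - y| ≤ ε} ∂φ*(ȳ) is convex (an interval), i.e., the condition (newc) holds automatically in one dimension. -/

import Mathlib

noncomputable section

/-- Convexity for `EReal`-valued functions. -/
def ConvexE {V : Type*} [AddCommGroup V] [Module ℝ V] (f : V → EReal) : Prop :=
  ∀ x₁ x₂ : V, ∀ a b : ℝ, 0 ≤ a → 0 ≤ b → a + b = 1 →
    f (a • x₁ + b • x₂) ≤ (a : EReal) * f x₁ + (b : EReal) * f x₂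

/-- `Γ₀`: proper, convex, lower semicontinuous, with values in `ℝ ∪ {+∞}`. -/
def Gamma0 {V : Type*} [AddCommGroup V] [Module ℝ V] [TopologicalSpace V]
    (f : V → EReal) : Prop :=
  (∀ v, f v ≠ ⊥) ∧ (∃ v, f v ≠ ⊤) ∧ ConvexE f ∧ LowerSemicontinuous f

/-- Subdifferential with respect to a pairing `p`. -/
def subdiffE {V W : Type*} [AddCommGroup V] [Module ℝ V]
    (p : V → W → ℝ) (f : V → EReal) (x : V) : Set W :=
  {u | ∀ z, (p (z - x) u : EReal) + f x ≤ f z}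

/-- Bipotential with respect to the duality pairing `p`. -/
def IsBipotential {X Y : Type*} [AddCommGroup X] [Module ℝ X] [TopologicalSpace X]
    [AddCommGroup Y] [Module ℝ Y] [TopologicalSpace Y]
    (p : X → Y → ℝ) (b : X → Y → EReal) : Prop :=
  (∀ x y, b x y ≠ ⊥) ∧
  (∀ x, (∃ y, b x y ≠ ⊤) → Gamma0 (b x)) ∧
  (∀ y, (∃ x, b x y ≠ ⊤) → Gamma0 (fun x => b x y)) ∧
  (∀ x y, (p x y : EReal) ≤ b x y) ∧
  (∀ x y,
    (y ∈ subdiffE p (fun x' => b x' y) x ↔ b x y = (p x y : EReal)) ∧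
    (x ∈ subdiffE (fun y' x' => p x' y') (b x) y ↔ b x y = (p x y : EReal)))

/-- The graph `M(b)` of a bipotential. -/
def MGraph {X Y : Type*} (p : X → Y → ℝ) (b : X → Y → EReal) : Set (X × Y) :=
  {q | b q.1 q.2 = (p q.1 q.2 : EReal)}

/-- Synchronised convex function (sync). -/
def IsSync {X Y : Type*} [AddCommGroup X] [Module ℝ X] [TopologicalSpace X]
    [AddCommGroup Y] [Module ℝ Y] [TopologicalSpace Y]
    (c : X → Y → EReal) : Prop :=
  (∀ x y, 0 ≤ c x y) ∧
  (∀ x, (∃ y, c x y ≠ ⊤) → Gamma0 (c x)) ∧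
  (∀ y, (∃ x, c x y ≠ ⊤) → Gamma0 (fun x => c x y)) ∧
  (∀ x, (∃ y', c x y' ≠ ⊤) → ∀ y, (∀ y', c x y ≤ c x y') → c x y = 0) ∧
  (∀ y, (∃ x', c x' y ≠ ⊤) → ∀ x, (∀ x', c x y ≤ c x' y) → c x y = 0)

/-- A BB-graph: all sections are convex and closed. -/
def IsBBGraph {X Y : Type*} [AddCommGroup X] [Module ℝ X] [TopologicalSpace X]
    [AddCommGroup Y] [Module ℝ Y] [TopologicalSpace Y] (M : Set (X × Y)) : Prop :=
  (∀ x, Convex ℝ {y | (x, y) ∈ M} ∧ IsClosed {y | (x, y) ∈ M}) ∧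
  (∀ y, Convex ℝ {x | (x, y) ∈ M} ∧ IsClosed {x | (x, y) ∈ M})

/-- Fenchel conjugate on `ℝ` (self-dual via multiplication). -/
def fenchelR (φ : ℝ → EReal) (y : ℝ) : EReal := ⨆ x : ℝ, ((x * y : ℝ) : EReal) - φ x

/-- Subdifferential on `ℝ` (self-dual via multiplication). -/
def subdiffR (ψ : ℝ → EReal) (y : ℝ) : Set ℝ :=
  {x | ∀ z : ℝ, (((z - y) * x : ℝ) : EReal) + ψ y ≤ ψ z}

namespace NewcAux

/-- The conjugate shifted by a linear term. -/
def shiftF (φ : ℝ → EReal) (x t : ℝ) : EReal :=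
  ⨆ x' : ℝ, ((x' * t - x * t : ℝ) : EReal) - φ x'

lemma ereal_rearrange (p q : ℝ) (e : EReal) :
    ((p - q : ℝ) : EReal) - e = (((p : ℝ) : EReal) - e) - ((q : ℝ) : EReal) := by
  induction e using EReal.rec with
  | bot => rw [EReal.coe_sub_bot, EReal.coe_sub_bot, EReal.top_sub_coe]
  | coe c =>
    rw [← EReal.coe_sub, ← EReal.coe_sub, ← EReal.coe_sub]
    exact congrArg _ (by ring)
  | top => simp

lemma ereal_le_sub_add (a : EReal) (c : ℝ) : a ≤ (a - (c : EReal)) + (c : EReal) := by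
  induction a using EReal.rec with
  | bot => simp
  | coe r =>
    rw [← EReal.coe_sub, ← EReal.coe_add]
    exact_mod_cast le_of_eq (by ring)
  | top => simp [EReal.top_sub_coe]

lemma shiftF_eq (φ : ℝ → EReal) (x t : ℝ) :
    shiftF φ x t = fenchelR φ t - ((x * t : ℝ) : EReal) := by
  refine le_antisymm (iSup_le fun x' => ?_) ?_
  · rw [ereal_rearrange]
    exact EReal.sub_le_sub (le_iSup (fun x'' => ((x'' * t : ℝ) : EReal) - φ x'') x') le_rfl
  · refine EReal.sub_le_of_le_add (iSup_le fun x' => ?_)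
    calc ((x' * t : ℝ) : EReal) - φ x'
        ≤ (((x' * t - x * t : ℝ) : EReal) - φ x') + ((x * t : ℝ) : EReal) := by
          rw [ereal_rearrange]
          exact ereal_le_sub_add _ _
      _ ≤ shiftF φ x t + ((x * t : ℝ) : EReal) :=
          add_le_add (le_iSup (fun x'' => ((x'' * t - x * t : ℝ) : EReal) - φ x'') x') le_rfl

lemma shiftF_lsc (φ : ℝ → EReal) (x : ℝ) : LowerSemicontinuous (shiftF φ x) := by
  apply lowerSemicontinuous_iSup
  intro x'
  rcases eq_or_ne (φ x') ⊤ with h | hT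
  · have : (fun t => ((x' * t - x * t : ℝ) : EReal) - φ x') = fun _ => (⊥ : EReal) := by
      funext t; rw [h]; simp
    rw [this]; exact lowerSemicontinuous_const
  rcases eq_or_ne (φ x') ⊥ with h | hB
  · have : (fun t => ((x' * t - x * t : ℝ) : EReal) - φ x') = fun _ => (⊤ : EReal) := by
      funext t; rw [h, EReal.coe_sub_bot]
    rw [this]; exact lowerSemicontinuous_const
  · obtain ⟨c, hc⟩ : ∃ c : ℝ, φ x' = (c : EReal) := ⟨_, (EReal.coe_toReal hT hB).symm⟩
    have : (fun t => ((x' * t - x * t : ℝ) : EReal) - φ x')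
        = fun t => ((x' * t - x * t - c : ℝ) : EReal) := by
      funext t; rw [hc, ← EReal.coe_sub]
    rw [this]
    exact (continuous_coe_real_ereal.comp (by fun_prop)).lowerSemicontinuous

lemma fenchel_ne_bot (φ : ℝ → EReal) (hbot : ∀ v, φ v ≠ ⊥) (x₀ : ℝ) (hx₀ : φ x₀ ≠ ⊤)
    (t : ℝ) : fenchelR φ t ≠ ⊥ := by
  obtain ⟨c, hc⟩ : ∃ c : ℝ, φ x₀ = (c : EReal) := ⟨_, (EReal.coe_toReal hx₀ (hbot x₀)).symm⟩
  have hle : ((x₀ * t - c : ℝ) : EReal) ≤ fenchelR φ t := by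
    have h2 : ((x₀ * t - c : ℝ) : EReal) = ((x₀ * t : ℝ) : EReal) - φ x₀ := by
      rw [hc, ← EReal.coe_sub]
    rw [h2]
    exact le_iSup (fun x'' => ((x'' * t : ℝ) : EReal) - φ x'') x₀
  intro h
  rw [h] at hle
  exact (EReal.coe_ne_bot _) (le_bot_iff.mp hle)

lemma fenchel_le_combo (φ : ℝ → EReal) {y₁ y₂ r₁ r₂ : ℝ}
    (h₁ : fenchelR φ y₁ ≤ (r₁ : EReal)) (h₂ : fenchelR φ y₂ ≤ (r₂ : EReal))
    {a b : ℝ} (ha : 0 ≤ a) (hb : 0 ≤ b) (hab : a + b = 1) :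
    fenchelR φ (a * y₁ + b * y₂) ≤ ((a * r₁ + b * r₂ : ℝ) : EReal) := by
  refine iSup_le fun x' => ?_
  rcases eq_or_ne (φ x') ⊤ with h | hT
  · rw [h]; simp
  have t₁ : ((x' * y₁ : ℝ) : EReal) - φ x' ≤ (r₁ : EReal) :=
    le_trans (le_iSup (fun x'' => ((x'' * y₁ : ℝ) : EReal) - φ x'') x') h₁
  have t₂ : ((x' * y₂ : ℝ) : EReal) - φ x' ≤ (r₂ : EReal) :=
    le_trans (le_iSup (fun x'' => ((x'' * y₂ : ℝ) : EReal) - φ x'') x') h₂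
  rcases eq_or_ne (φ x') ⊥ with h | hB
  · rw [h, EReal.coe_sub_bot, top_le_iff] at t₁
    exact absurd t₁ (EReal.coe_ne_top r₁)
  obtain ⟨c, hc⟩ : ∃ c : ℝ, φ x' = (c : EReal) := ⟨_, (EReal.coe_toReal hT hB).symm⟩
  rw [hc, ← EReal.coe_sub] at t₁ t₂
  rw [hc, ← EReal.coe_sub, EReal.coe_le_coe_iff]
  rw [EReal.coe_le_coe_iff] at t₁ t₂
  have key : x' * (a * y₁ + b * y₂) - c
      = a * (x' * y₁ - c) + b * (x' * y₂ - c) + c * (a + b - 1) := by ring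
  rw [hab] at key
  linarith [mul_le_mul_of_nonneg_left t₁ ha, mul_le_mul_of_nonneg_left t₂ hb, key]

lemma exists_min_on_compact {s : Set ℝ} (hs : IsCompact s) (hne : s.Nonempty)
    {g : ℝ → EReal} (hg : LowerSemicontinuous g) : ∃ t ∈ s, ∀ u ∈ s, g t ≤ g u := by
  haveI : Nonempty s := hne.to_subtype
  set K : s → Set ℝ := fun u => s ∩ {t | g t ≤ g u} with hK
  have hsub : ∀ u v : s, g u ≤ g v → K u ⊆ K v := by
    intro u v huv t ht
    exact ⟨ht.1, le_trans ht.2 huv⟩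
  have hclosed : ∀ u : s, IsClosed (K u) :=
    fun u => hs.isClosed.inter (hg.isClosed_preimage (g u))
  have hcomp : ∀ u : s, IsCompact (K u) :=
    fun u => hs.inter_right (hg.isClosed_preimage (g u))
  have hKne : ∀ u : s, (K u).Nonempty := fun u => ⟨u, u.2, Set.mem_setOf.mpr le_rfl⟩
  have hdir : Directed (· ⊇ ·) K := by
    intro u v
    rcases le_total (g u) (g v) with h | h
    · exact ⟨u, subset_rfl, hsub u v h⟩
    · exact ⟨v, hsub v u h, subset_rfl⟩
  obtain ⟨t, ht⟩ :=
    IsCompact.nonempty_iInter_of_directed_nonempty_isCompact_isClosed K hdir hKne hcomp hclosed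
  simp only [Set.mem_iInter] at ht
  obtain ⟨u₀⟩ := ‹Nonempty s›
  exact ⟨t, (ht u₀).1, fun u hu => (ht ⟨u, hu⟩).2⟩

end NewcAux

/-- in dimension one, for `φ ∈ Γ₀(ℝ)` and any `y`, the set
`⋃_{|y' - y| ≤ ε} ∂φ*(y')` is convex (an interval): condition (newc) holds
automatically. -/
theorem newc_holds_dim_one (φ : ℝ → EReal) (hφ : Gamma0 φ) (ε : ℝ) (hε : 0 < ε) :
    ∀ y : ℝ, Convex ℝ (⋃ y' ∈ Metric.closedBall y ε, subdiffR (fenchelR φ) y') := by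
  obtain ⟨hbot, ⟨x₀, hx₀⟩, hconv, hlsc⟩ := hφ
  intro y
  set ψ := fenchelR φ with hψdef
  have hψbot : ∀ t, ψ t ≠ ⊥ := NewcAux.fenchel_ne_bot φ hbot x₀ hx₀
  rw [convex_iff_ordConnected]
  constructor
  intro x₁ hx₁ x₂ hx₂ x hx
  simp only [Set.mem_iUnion, exists_prop] at hx₁ hx₂ ⊢
  obtain ⟨y₁, hy₁, h1⟩ := hx₁
  obtain ⟨y₂, hy₂, h2⟩ := hx₂
  by_cases htop : ψ y₁ = ⊤ ∨ ψ y₂ = ⊤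
  · -- degenerate case: ψ ≡ ⊤ and every point is a subgradient everywhere
    have hall : ∀ z, ψ z = ⊤ := by
      rcases htop with h | h
      · intro z
        have := h1 z
        rw [h] at this
        rw [EReal.coe_add_top] at this
        exact top_le_iff.mp this
      · intro z
        have := h2 z
        rw [h] at this
        rw [EReal.coe_add_top] at this
        exact top_le_iff.mp this
    refine ⟨y, Metric.mem_closedBall_self hε.le, fun z => ?_⟩
    rw [hall z]
    exact le_top
  push_neg at htop
  obtain ⟨hT1, hT2⟩ := htop
  obtain ⟨r₁, hr₁⟩ : ∃ r : ℝ, ψ y₁ = (r : EReal) :=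
    ⟨(ψ y₁).toReal, (EReal.coe_toReal hT1 (hψbot y₁)).symm⟩
  obtain ⟨r₂, hr₂⟩ : ∃ r : ℝ, ψ y₂ = (r : EReal) :=
    ⟨(ψ y₂).toReal, (EReal.coe_toReal hT2 (hψbot y₂)).symm⟩
  -- ψ is finite on the segment between y₁ and y₂
  have hIfin : ∀ t ∈ Set.uIcc y₁ y₂, ψ t ≠ ⊤ := by
    intro t ht
    rw [← segment_eq_uIcc] at ht
    obtain ⟨a, b, ha, hb, hab, habt⟩ := ht
    have := NewcAux.fenchel_le_combo φ (le_of_eq hr₁) (le_of_eq hr₂) ha hb hab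
    simp only [smul_eq_mul] at habt
    rw [habt] at this
    exact ne_top_of_le_ne_top (EReal.coe_ne_top _) this
  -- minimize t ↦ ψ t - x t over uIcc y₁ y₂
  obtain ⟨y', hy'I, hy'min⟩ := NewcAux.exists_min_on_compact isCompact_uIcc
    ⟨y₁, Set.left_mem_uIcc⟩ (NewcAux.shiftF_lsc φ x)
  -- real values of ψ on the segment
  have hval : ∀ t ∈ Set.uIcc y₁ y₂, ψ t = (((ψ t).toReal : ℝ) : EReal) :=
    fun t ht => (EReal.coe_toReal (hIfin t ht) (hψbot t)).symm
  set r' : ℝ := (ψ y').toReal with hr'def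
  have hr' : ψ y' = (r' : EReal) := hval y' hy'I
  -- min property in real terms
  have hminR : ∀ t ∈ Set.uIcc y₁ y₂, r' - x * y' ≤ (ψ t).toReal - x * t := by
    intro t ht
    have := hy'min t ht
    rw [NewcAux.shiftF_eq φ x y', NewcAux.shiftF_eq φ x t, ← hψdef, hr', hval t ht,
      ← EReal.coe_sub, ← EReal.coe_sub, EReal.coe_le_coe_iff] at this
    exact this
  -- y' lies in the closed ball
  have hy'ball : y' ∈ Metric.closedBall y ε := by
    rw [Metric.mem_closedBall, Real.dist_eq, abs_le] at hy₁ hy₂ ⊢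
    rcases Set.mem_uIcc.mp hy'I with ⟨h₁, h₂⟩ | ⟨h₁, h₂⟩ <;>
      constructor <;> linarith [hy₁.1, hy₁.2, hy₂.1, hy₂.2]
  refine ⟨y', hy'ball, fun z => ?_⟩
  rcases eq_or_ne (ψ z) ⊤ with hz | hz
  · rw [hz]; exact le_top
  obtain ⟨rz, hrz⟩ : ∃ r : ℝ, ψ z = (r : EReal) :=
    ⟨(ψ z).toReal, (EReal.coe_toReal hz (hψbot z)).symm⟩
  rw [hr', hrz, ← EReal.coe_add, EReal.coe_le_coe_iff]
  -- goal: (z - y') * x + r' ≤ rz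
  rcases le_or_gt z (y₁ ⊓ y₂) with hz1 | hz1
  · -- z to the left: use the subgradient x₁ at y₁
    have hzy₁ : z ≤ y₁ := le_trans hz1 inf_le_left
    have hsub := h1 z
    rw [hr₁, hrz, ← EReal.coe_add, EReal.coe_le_coe_iff] at hsub
    have hmin₁ := hminR y₁ Set.left_mem_uIcc
    rw [hr₁, EReal.toReal_coe] at hmin₁
    have hmul : (z - y₁) * x ≤ (z - y₁) * x₁ :=
      mul_le_mul_of_nonpos_left hx.1 (by linarith)
    linarith
  rcases le_or_gt (y₁ ⊔ y₂) z with hz2 | hz2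
  · -- z to the right: use the subgradient x₂ at y₂
    have hzy₂ : y₂ ≤ z := le_trans le_sup_right hz2
    have hsub := h2 z
    rw [hr₂, hrz, ← EReal.coe_add, EReal.coe_le_coe_iff] at hsub
    have hmin₂ := hminR y₂ Set.right_mem_uIcc
    rw [hr₂, EReal.toReal_coe] at hmin₂
    have hmul : (z - y₂) * x ≤ (z - y₂) * x₂ :=
      mul_le_mul_of_nonneg_left hx.2 (by linarith)
    linarith
  · -- z in the segment: use minimality of y'
    have hzI : z ∈ Set.uIcc y₁ y₂ := ⟨hz1.le, hz2.le⟩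
    have := hminR z hzI
    rw [hrz, EReal.toReal_coe] at this
    linarith
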